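/- Degeneration T_14 → T_18: let μ be the commutative bilinear product on ℂ³ with u₁∘u₁ = u₁, u₁∘u₂ = (1/2)u₂ and all other products of basis vectors zero, and let λ be the commutative bilinear product with u₁∘u₂ = u₃ and all other products of basis vectors zero. Then λ lies in the closure of the orbit {g·μ : g ∈ GL(3,ℂ)} in the space of bilinear maps ℂ³ × ℂ³ → ℂ³ with its standard topology. -/

import Mathlib

open Matrix

/-- The bilinear product on `ℂ³` determined by structure constants `c`:
`(x ∘ y) k = ∑ i j, x i * y j * c i j k`. -/
noncomputable def bilOf (c : Fin 3 → Fin 3 → Fin 3 → ℂ) (x y : Fin 3 → ℂ) : Fin 3 → ℂ :=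
  fun k => ∑ i, ∑ j, x i * y j * c i j k

/-- The action of `g ∈ GL(3,ℂ)` on structure constants, corresponding to the
action `(g·μ)(x,y) = g(μ(g⁻¹x, g⁻¹y))` on bilinear maps: `(act g c) i j` is the
coordinate vector of `(g·μ)(uᵢ, uⱼ)` in the standard basis `u₁, u₂, u₃`. -/
noncomputable def act (g : GL (Fin 3) ℂ) (c : Fin 3 → Fin 3 → Fin 3 → ℂ) :
    Fin 3 → Fin 3 → Fin 3 → ℂ :=
  fun i j => (g : Matrix (Fin 3) (Fin 3) ℂ).mulVec
    (bilOf c (((g⁻¹ : GL (Fin 3) ℂ) : Matrix (Fin 3) (Fin 3) ℂ).mulVec (Pi.single i 1))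
             (((g⁻¹ : GL (Fin 3) ℂ) : Matrix (Fin 3) (Fin 3) ℂ).mulVec (Pi.single j 1)))

/-- Degeneration T_14 → T_18: here μ is u₁∘u₁ = u₁, u₁∘u₂ = (1/2)u₂ and λ is u₁∘u₂ = u₃; λ lies in the closure of the GL(3,ℂ)-orbit of μ. -/
noncomputable def Am (t : ℂ) : Matrix (Fin 3) (Fin 3) ℂ := ![![t,0,0],![0,1,0],![0,1,-t/2]]
noncomputable def Bm (t : ℂ) : Matrix (Fin 3) (Fin 3) ℂ := ![![t⁻¹,0,0],![0,1,0],![0,2*t⁻¹,-2*t⁻¹]]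

lemma hBA (t : ℂ) (ht : t ≠ 0) : Bm t * Am t = 1 := by
  ext i j
  fin_cases i <;> fin_cases j <;>
    simp [Matrix.mul_apply, Fin.sum_univ_three, Matrix.one_apply] <;> simp [Am, Bm, Matrix.vecHead, Matrix.vecTail] <;> (try field_simp) <;> (try ring)

lemma hAB (t : ℂ) (ht : t ≠ 0) : Am t * Bm t = 1 := by
  ext i j
  fin_cases i <;> fin_cases j <;>
    simp [Matrix.mul_apply, Fin.sum_univ_three, Matrix.one_apply] <;> simp [Am, Bm, Matrix.vecHead, Matrix.vecTail] <;> (try field_simp) <;> (try ring)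

noncomputable def gt (t : ℂ) (ht : t ≠ 0) : GL (Fin 3) ℂ :=
  ⟨Bm t, Am t, hBA t ht, hAB t ht⟩

noncomputable def μ0 : Fin 3 → Fin 3 → Fin 3 → ℂ :=
  ![![![(1:ℂ),0,0],![(0:ℂ),1/2,0],![(0:ℂ),0,0]],![![(0:ℂ),1/2,0],![(0:ℂ),0,0],![(0:ℂ),0,0]],![![(0:ℂ),0,0],![(0:ℂ),0,0],![(0:ℂ),0,0]]]

noncomputable def ct (t : ℂ) : Fin 3 → Fin 3 → Fin 3 → ℂ :=
  ![![![t,0,0],![0,t/2,1],![0,0,0]],![![0,t/2,1],![0,0,0],![0,0,0]],![![0,0,0],![0,0,0],![0,0,0]]]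

set_option maxHeartbeats 1000000 in
lemma key (t : ℂ) (ht : t ≠ 0) : act (gt t ht) μ0 = ct t := by
  have h1 : ((gt t ht : GL (Fin 3) ℂ) : Matrix (Fin 3) (Fin 3) ℂ) = Bm t := rfl
  have h2 : (((gt t ht)⁻¹ : GL (Fin 3) ℂ) : Matrix (Fin 3) (Fin 3) ℂ) = Am t := rfl
  funext i j
  simp only [act, h1, h2, Matrix.mulVec_single, mul_one]
  funext k
  fin_cases i <;> fin_cases j <;> fin_cases k <;>
    simp [bilOf, μ0, ct, Am, Bm, Matrix.col, Matrix.transpose, Matrix.of_apply, Matrix.mulVec, dotProduct, Fin.sum_univ_three, Matrix.vecHead, Matrix.vecTail] <;>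
    field_simp <;> ring

lemma ct_cont : Continuous ct := by
  apply continuous_pi; intro i; apply continuous_pi; intro j; apply continuous_pi; intro k
  fin_cases i <;> fin_cases j <;> fin_cases k <;> simp [ct] <;> fun_prop

theorem degeneration_T14_T18 :
    (![![![(0:ℂ),0,0],![(0:ℂ),0,1],![(0:ℂ),0,0]],![![(0:ℂ),0,1],![(0:ℂ),0,0],![(0:ℂ),0,0]],![![(0:ℂ),0,0],![(0:ℂ),0,0],![(0:ℂ),0,0]]] : Fin 3 → Fin 3 → Fin 3 → ℂ)
      ∈ closure {c : Fin 3 → Fin 3 → Fin 3 → ℂ |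
          ∃ g : GL (Fin 3) ℂ, c = act g (![![![(1:ℂ),0,0],![(0:ℂ),1/2,0],![(0:ℂ),0,0]],![![(0:ℂ),1/2,0],![(0:ℂ),0,0],![(0:ℂ),0,0]],![![(0:ℂ),0,0],![(0:ℂ),0,0],![(0:ℂ),0,0]]] : Fin 3 → Fin 3 → Fin 3 → ℂ)} := by
  have h0 : ct 0 = (![![![(0:ℂ),0,0],![(0:ℂ),0,1],![(0:ℂ),0,0]],![![(0:ℂ),0,1],![(0:ℂ),0,0],![(0:ℂ),0,0]],![![(0:ℂ),0,0],![(0:ℂ),0,0],![(0:ℂ),0,0]]] : Fin 3 → Fin 3 → Fin 3 → ℂ) := by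
    funext i j k
    fin_cases i <;> fin_cases j <;> fin_cases k <;> norm_num [ct]
  rw [← h0]
  have htend : Filter.Tendsto ct (nhdsWithin (0:ℂ) {(0:ℂ)}ᶜ) (nhds (ct 0)) :=
    (ct_cont.tendsto 0).mono_left nhdsWithin_le_nhds
  refine mem_closure_of_tendsto htend ?_
  filter_upwards [self_mem_nhdsWithin] with t ht
  exact ⟨gt t ht, (key t ht).symm⟩
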